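/- Define e(C, θ) = (C·cos θ, sin θ) for C ∈ {−1, 1} and θ ∈ [0°, 90°). Let j ≥ 1, let C₁, ..., C_j ∈ {−1, 1} with R = #{i : Cᵢ = 1} and L = #{i : Cᵢ = −1}, and let θ₁, ..., θ_j ∈ [0°, 90°). Then the sum s = Σᵢ e(Cᵢ, θᵢ) lies in the staircase region based at the point (R − L, 0). -/

import Mathlib

open Real

/-- The staircase region based at the lattice point `(m, 0)`: the closed region of the
upper half plane bounded on the left by the leftwards staircase of unit circles (the
union over `ℓ ∈ ℕ` of counterclockwise quarter arcs of unit circles from `(m - ℓ, ℓ)`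
to `(m - ℓ - 1, ℓ + 1)`, centered at `(m - ℓ - 1, ℓ)`) and on the right by the
rightwards staircase of unit circles (the union over `ℓ ∈ ℕ` of clockwise quarter arcs
from `(m + ℓ, ℓ)` to `(m + ℓ + 1, ℓ + 1)`, centered at `(m + ℓ, ℓ + 1)`).  A point
`p = (x, y)` with `ℓ ≤ y ≤ ℓ + 1` belongs to the region iff it lies (weakly) to the
right of the left arc at that height and (weakly) to the left of the right arc. -/
def staircaseRegion (m : ℤ) : Set (ℝ × ℝ) :=
  {p | 0 ≤ p.2 ∧ ∀ ℓ : ℕ, (ℓ : ℝ) ≤ p.2 → p.2 ≤ (ℓ : ℝ) + 1 →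
    (((m : ℝ) - ℓ - 1 ≤ p.1 ∧
        1 ≤ (p.1 - ((m : ℝ) - ℓ - 1)) ^ 2 + (p.2 - ℓ) ^ 2) ∧
      (p.1 ≤ (m : ℝ) + ℓ ∨
        (p.1 - ((m : ℝ) + ℓ)) ^ 2 + (p.2 - ((ℓ : ℝ) + 1)) ^ 2 ≤ 1))}

lemma keyA (u₁ u₂ c s : ℝ) (h : 1 ≤ u₁ ^ 2 + u₂ ^ 2) (hu1 : 0 ≤ u₁) (hu2 : 0 ≤ u₂)
    (hu2' : u₂ ≤ 1 - s) (hc : 0 ≤ c) (hs : 0 ≤ s) (hcs : c ^ 2 + s ^ 2 = 1) :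
    1 - c ≤ u₁ := by
  have h1 : 1 ≤ c + s := by nlinarith [mul_nonneg hc hs]
  nlinarith [mul_nonneg hu1 hc, sq_nonneg (u₁ - (1 - c)), sq_nonneg (u₁ + 1 - c)]

lemma keyB (u₁ u₂ c s : ℝ) (h : 1 ≤ u₁ ^ 2 + u₂ ^ 2) (hu1 : 0 ≤ u₁) (hu2 : 0 ≤ u₂)
    (hc : 0 ≤ c) (hs : 0 ≤ s) (hcs : c ^ 2 + s ^ 2 = 1) :
    1 ≤ (u₁ - (1 - c)) ^ 2 + (u₂ + s) ^ 2 := by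
  rcases le_or_gt u₁ 1 with h1 | h1
  · nlinarith [mul_nonneg hu2 hs, mul_nonneg (sub_nonneg.2 h1)
      (sub_nonneg.2 (by nlinarith [sq_nonneg s] : c ≤ 1))]
  · nlinarith [mul_nonneg hu2 hs, mul_nonneg (by linarith : (0:ℝ) ≤ u₁ - 1)
      (by linarith [mul_nonneg hc hc] : (0:ℝ) ≤ u₁ - 1 + 2 * c)]

lemma keyC (w₁ w₂ c s : ℝ) (hw : w₁ ^ 2 + w₂ ^ 2 ≤ 1) (h1 : 1 - c ≤ w₁)
    (h2 : w₂ + s ≤ 0) (hc : 0 ≤ c) (hc1 : c ≤ 1) (hs : 0 ≤ s) :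
    (w₁ - (1 - c)) ^ 2 + (w₂ + s) ^ 2 ≤ 1 := by
  nlinarith [mul_nonneg (sub_nonneg.2 hc1) (by linarith : (0:ℝ) ≤ 2 * w₁ - (1 - c)),
    mul_nonneg hs (by linarith : (0:ℝ) ≤ -(2 * w₂ + s))]

lemma keyD (u₁ u₂ c s : ℝ) (h : 1 ≤ u₁ ^ 2 + u₂ ^ 2) (hu1 : 0 ≤ u₁) (hu2 : u₂ ≤ 1)
    (hc : 0 ≤ c) (hs1 : s ≤ 1) (hcs : c ^ 2 + s ^ 2 = 1) :
    1 ≤ (u₁ + c) ^ 2 + (u₂ + s - 1) ^ 2 := by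
  nlinarith [mul_nonneg hu1 hc, mul_nonneg (sub_nonneg.2 hs1) (sub_nonneg.2 hu2)]

lemma keyE (w₁ w₂ : ℝ) (hw : w₁ ^ 2 + w₂ ^ 2 ≤ 1) : w₁ ≤ 1 := by
  nlinarith [sq_nonneg (w₁ - 1), sq_nonneg w₂]

lemma keyF (u₁ u₂ c s : ℝ) (h : 1 ≤ u₁ ^ 2 + u₂ ^ 2) (hu1 : 0 ≤ u₁) (hu2 : 0 ≤ u₂)
    (hc1 : c ≤ 1) (hs : 0 ≤ s) :
    1 ≤ (u₁ + (1 - c)) ^ 2 + (u₂ + s) ^ 2 := by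
  nlinarith [mul_nonneg hu1 (sub_nonneg.2 hc1), mul_nonneg hu2 hs,
    sq_nonneg (1 - c), sq_nonneg s]

lemma keyG (w₁ w₂ c s : ℝ) (h0 : w₁ ≤ 0) (h1 : c - 1 ≤ w₁) (h2 : w₂ + s ≤ 0)
    (h3 : -1 ≤ w₂) (hc : 0 ≤ c) (hs : 0 ≤ s) (hcs : c ^ 2 + s ^ 2 = 1) :
    (w₁ + (1 - c)) ^ 2 + (w₂ + s) ^ 2 ≤ 1 := by
  have hsum : 1 ≤ c + s := by nlinarith [mul_nonneg hc hs]
  have hs1 : s ≤ 1 := by nlinarith [sq_nonneg c]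
  nlinarith [sq_nonneg (w₁ + 1 - c), sq_nonneg (w₂ + s),
    mul_nonneg (by linarith : (0:ℝ) ≤ w₁ + 1 - c) (by linarith : (0:ℝ) ≤ -w₁),
    mul_nonneg (by linarith : (0:ℝ) ≤ -(w₂ + s)) (by linarith : (0:ℝ) ≤ 1 - s - (-(w₂ + s)))]

lemma keyH (w₁ w₂ c s : ℝ) (hw : w₁ ^ 2 + w₂ ^ 2 ≤ 1) (h2 : w₂ ≤ -s)
    (hc : 0 ≤ c) (hs : 0 ≤ s) (hcs : c ^ 2 + s ^ 2 = 1) :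
    (w₁ + (1 - c)) ^ 2 + (w₂ + s) ^ 2 ≤ 1 := by
  have hwc : w₁ ≤ c := by
    nlinarith [mul_nonneg hs (by linarith : (0:ℝ) ≤ -w₂ - s), sq_nonneg (w₁ - c),
      sq_nonneg (w₁ + c)]
  nlinarith [mul_nonneg (by nlinarith [sq_nonneg s] : (0:ℝ) ≤ 1 - c)
      (by linarith : (0:ℝ) ≤ c - w₁),
    mul_nonneg hs (by linarith : (0:ℝ) ≤ -w₂ - s)]

lemma keyI (w₁ w₂ c s : ℝ) (hw : w₁ ^ 2 + w₂ ^ 2 ≤ 1) (h1 : c ≤ w₁) (h2 : -s ≤ w₂)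
    (hc : 0 ≤ c) (hs : 0 ≤ s) (hs1 : s ≤ 1) (hcs : c ^ 2 + s ^ 2 = 1) :
    (w₁ - c) ^ 2 + (w₂ + s - 1) ^ 2 ≤ 1 := by
  nlinarith [mul_nonneg hc (by linarith : (0:ℝ) ≤ w₁ - c),
    mul_nonneg (by linarith : (0:ℝ) ≤ 1 - s) (by linarith : (0:ℝ) ≤ w₂ + s)]

lemma step_right (m : ℤ) (x y c s : ℝ) (hcs : c ^ 2 + s ^ 2 = 1)
    (hc : 0 ≤ c) (hs : 0 ≤ s)
    (hp : (x, y) ∈ staircaseRegion m) :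
    (x + c, y + s) ∈ staircaseRegion (m + 1) := by
  obtain ⟨hy, h⟩ := hp
  simp only at hy
  have hc1 : c ≤ 1 := by nlinarith [sq_nonneg s]
  have hs1 : s ≤ 1 := by nlinarith [sq_nonneg c]
  refine ⟨by simp only; linarith, ?_⟩
  intro ℓ hl1 hl2
  simp only at hl1 hl2 ⊢
  push_cast
  rcases le_or_gt (ℓ : ℝ) y with hcase | hcase
  · obtain ⟨⟨ha1, ha2⟩, hb⟩ := h ℓ hcase (by linarith)
    refine ⟨⟨?_, ?_⟩, ?_⟩
    · have := keyA (x - ((m:ℝ) - ℓ - 1)) (y - ℓ) c s (by linarith) (by linarith)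
        (by linarith) (by linarith) hc hs hcs
      linarith
    · have := keyB (x - ((m:ℝ) - ℓ - 1)) (y - ℓ) c s (by linarith) (by linarith)
        (by linarith) hc hs hcs
      linarith
    · rcases hb with hb | hb
      · exact Or.inl (by linarith)
      · rcases le_or_gt (x + c) ((m:ℝ) + 1 + ℓ) with h2 | h2
        · exact Or.inl h2
        · refine Or.inr ?_
          have := keyC (x - ((m:ℝ) + ℓ)) (y - (ℓ + 1)) c s (by linarith) (by linarith)
            (by linarith) hc hc1 hs
          linarith
  · have hl0 : ℓ ≠ 0 := by
      rintro rfl; simp at hcase; linarith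
    obtain ⟨k, rfl⟩ : ∃ k, ℓ = k + 1 :=
      ⟨ℓ - 1, (Nat.succ_pred_eq_of_pos (Nat.pos_of_ne_zero hl0)).symm⟩
    push_cast at hl1 hl2 hcase ⊢
    obtain ⟨⟨ha1, ha2⟩, hb⟩ := h k (by linarith) (by linarith)
    refine ⟨⟨by linarith, ?_⟩, ?_⟩
    · have := keyD (x - ((m:ℝ) - k - 1)) (y - k) c s (by linarith) (by linarith)
        (by linarith) hc hs1 hcs
      linarith
    · refine Or.inl ?_
      rcases hb with hb | hb
      · linarith
      · have := keyE (x - ((m:ℝ) + k)) (y - (k + 1)) (by linarith)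
        linarith

lemma step_left (m : ℤ) (x y c s : ℝ) (hcs : c ^ 2 + s ^ 2 = 1)
    (hc : 0 ≤ c) (hs : 0 ≤ s)
    (hp : (x, y) ∈ staircaseRegion m) :
    (x - c, y + s) ∈ staircaseRegion (m - 1) := by
  obtain ⟨hy, h⟩ := hp
  simp only at hy
  have hc1 : c ≤ 1 := by nlinarith [sq_nonneg s]
  have hs1 : s ≤ 1 := by nlinarith [sq_nonneg c]
  refine ⟨by simp only; linarith, ?_⟩
  intro ℓ hl1 hl2
  simp only at hl1 hl2 ⊢
  push_cast
  rcases le_or_gt (ℓ : ℝ) y with hcase | hcase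
  · obtain ⟨⟨ha1, ha2⟩, hb⟩ := h ℓ hcase (by linarith)
    refine ⟨⟨by linarith, ?_⟩, ?_⟩
    · have := keyF (x - ((m:ℝ) - ℓ - 1)) (y - ℓ) c s (by linarith) (by linarith)
        (by linarith) hc1 hs
      linarith
    · rcases le_or_gt (x - c) ((m:ℝ) - 1 + ℓ) with h2 | h2
      · exact Or.inl h2
      · refine Or.inr ?_
        rcases hb with hb | hb
        · have := keyG (x - ((m:ℝ) + ℓ)) (y - (ℓ + 1)) c s (by linarith) (by linarith)
            (by linarith) (by linarith) hc hs hcs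
          linarith
        · have := keyH (x - ((m:ℝ) + ℓ)) (y - (ℓ + 1)) c s (by linarith) (by linarith)
            hc hs hcs
          linarith
  · have hl0 : ℓ ≠ 0 := by
      rintro rfl; simp at hcase; linarith
    obtain ⟨k, rfl⟩ : ∃ k, ℓ = k + 1 :=
      ⟨ℓ - 1, (Nat.succ_pred_eq_of_pos (Nat.pos_of_ne_zero hl0)).symm⟩
    push_cast at hl1 hl2 hcase ⊢
    obtain ⟨⟨ha1, ha2⟩, hb⟩ := h k (by linarith) (by linarith)
    refine ⟨⟨by linarith, ?_⟩, ?_⟩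
    · nlinarith [sq_nonneg (y + s - (k + 1 + 1)),
        sq_nonneg (x - c - ((m:ℝ) - 1 - (k + 1) - 1) - 1)]
    · rcases hb with hb | hb
      · exact Or.inl (by linarith)
      · rcases le_or_gt (x - c) ((m:ℝ) - 1 + (k + 1)) with h2 | h2
        · exact Or.inl h2
        · refine Or.inr ?_
          have := keyI (x - ((m:ℝ) + k)) (y - (k + 1)) c s (by linarith) (by linarith)
            (by linarith) hc hs hs1 hcs
          linarith

lemma base0 : ((0:ℝ), (0:ℝ)) ∈ staircaseRegion 0 := by
  refine ⟨le_refl _, ?_⟩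
  intro ℓ hl1 hl2
  have hℓ : ℓ = 0 := by
    have : (ℓ : ℝ) ≤ 0 := hl1
    exact_mod_cast le_antisymm (by exact_mod_cast this) (Nat.zero_le _)
  subst hℓ
  norm_num

lemma sum_aux {n : ℕ} (t : Finset (Fin n)) (C θ : Fin n → ℝ)
    (hC : ∀ i, C i = 1 ∨ C i = -1)
    (hθ : ∀ i, θ i ∈ Set.Ico 0 (π / 2)) :
    (∑ i ∈ t, (C i * Real.cos (θ i), Real.sin (θ i))) ∈
      staircaseRegion (∑ i ∈ t, if C i = 1 then 1 else -1) := by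
  induction t using Finset.induction_on with
  | empty => simp only [Finset.sum_empty]; exact base0
  | insert a t hnot ih =>
    rw [Finset.sum_insert hnot, Finset.sum_insert hnot]
    set p := ∑ i ∈ t, (C i * Real.cos (θ i), Real.sin (θ i)) with hp
    have hpe : (C a * Real.cos (θ a), Real.sin (θ a)) + p
        = (C a * Real.cos (θ a) + p.1, Real.sin (θ a) + p.2) := rfl
    rw [hpe]
    have hcs : Real.cos (θ a) ^ 2 + Real.sin (θ a) ^ 2 = 1 := Real.cos_sq_add_sin_sq _
    have hc : 0 ≤ Real.cos (θ a) := Real.cos_nonneg_of_mem_Icc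
      ⟨by linarith [(hθ a).1, pi_pos], le_of_lt (hθ a).2⟩
    have hs : 0 ≤ Real.sin (θ a) := Real.sin_nonneg_of_nonneg_of_le_pi (hθ a).1
      (by linarith [(hθ a).2.le, pi_pos])
    rcases hC a with h1 | h1
    · rw [h1, if_pos rfl, one_mul, add_comm (1:ℤ)]
      have := step_right _ p.1 p.2 _ _ hcs hc hs ih
      rw [add_comm (Real.cos (θ a)) p.1, add_comm (Real.sin (θ a)) p.2] at *
      exact this
    · rw [h1, if_neg (by norm_num), neg_one_mul]
      have := step_left _ p.1 p.2 _ _ hcs hc hs ih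
      have h2 : (-Real.cos (θ a) + p.1, Real.sin (θ a) + p.2)
          = (p.1 - Real.cos (θ a), p.2 + Real.sin (θ a)) := by
        ext <;> simp <;> ring
      rw [h2, add_comm (-1:ℤ)]
      convert this using 2
      ring

/-- with `e (C, θ) = (C cos θ, sin θ)` for `C ∈ {-1, 1}`, `θ ∈ [0°, 90°)`,
any sum `s = Σᵢ e (Cᵢ, θᵢ)` of `j ≥ 1` such vectors lies in the staircase region based
at `(R - L, 0)`, where `R = #{i : Cᵢ = 1}` and `L = #{i : Cᵢ = -1}`. -/
theorem sum_mem_staircaseRegion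
    (j : ℕ) (hj : 1 ≤ j) (C : Fin j → ℝ) (θ : Fin j → ℝ)
    (hC : ∀ i, C i = 1 ∨ C i = -1)
    (hθ : ∀ i, θ i ∈ Set.Ico 0 (π / 2))
    (m : ℤ)
    (hm : m = ({i | C i = 1} : Set (Fin j)).ncard - ({i | C i = -1} : Set (Fin j)).ncard) :
    (∑ i, (C i * Real.cos (θ i), Real.sin (θ i))) ∈ staircaseRegion m := by
  have hsum : (∑ i : Fin j, if C i = 1 then (1:ℤ) else -1) = m := by
    rw [hm]
    rw [Finset.sum_ite, Finset.sum_const, Finset.sum_const]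
    have h1 : ({i | C i = 1} : Set (Fin j)).ncard
        = (Finset.univ.filter (fun i => C i = 1)).card := by
      simp [Set.ncard_eq_toFinset_card', Set.toFinset_setOf]
    have h2 : ({i | C i = -1} : Set (Fin j)).ncard
        = (Finset.univ.filter (fun i => ¬ C i = 1)).card := by
      have : (Finset.univ.filter (fun i => ¬ C i = 1))
          = (Finset.univ.filter (fun i => C i = -1)) := by
        apply Finset.filter_congr
        intro i _
        rcases hC i with h | h <;> simp [h] <;> norm_num
      rw [this]
      simp [Set.ncard_eq_toFinset_card', Set.toFinset_setOf]
    rw [h1, h2]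
    push_cast
    ring
  rw [← hsum]
  exact sum_aux Finset.univ C θ hC hθ
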